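/- arXiv:2410.02453 — 2 statements merged into one kernel-verified Lean document; each statement's English description precedes it below -/
import Mathlib

section
/- If X is a Poisson random variable with parameter λ > 0, then E[1/X | X ≥ 1] ≤ 2/E[X | X ≥ 1]. -/
open Real

private lemma exp_tsum (l : ℝ) : Real.exp l = ∑' n : ℕ, l ^ n / (Nat.factorial n) := by
  rw [Real.exp_eq_exp_ℝ, NormedSpace.exp_eq_tsum_div]

private lemma shift1 (l : ℝ) :
    ∑' n : ℕ, l ^ n / (Nat.factorial n) = 1 + ∑' n : ℕ, l ^ (n + 1) / (Nat.factorial (n + 1)) := by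
  rw [Summable.tsum_eq_zero_add (Real.summable_pow_div_factorial l)]
  norm_num

private lemma shift2 (l : ℝ) :
    ∑' n : ℕ, l ^ (n + 1) / (Nat.factorial (n + 1))
      = l + ∑' n : ℕ, l ^ (n + 2) / (Nat.factorial (n + 2)) := by
  rw [Summable.tsum_eq_zero_add ((summable_nat_add_iff 1).mpr (Real.summable_pow_div_factorial l))]
  norm_num

private lemma sum_k (l : ℝ) :
    ∑' k : ℕ, (k : ℝ) * (l ^ k / (Nat.factorial k)) = l * Real.exp l := by
  have hsum : Summable (fun k : ℕ => (k : ℝ) * (l ^ k / (Nat.factorial k))) := by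
    rw [← summable_nat_add_iff 1]
    have : (fun n : ℕ => ((n + 1 : ℕ) : ℝ) * (l ^ (n + 1) / (Nat.factorial (n + 1))))
        = fun n : ℕ => l * (l ^ n / (Nat.factorial n)) := by
      funext n
      have h : (Nat.factorial (n + 1) : ℝ) = (n + 1) * Nat.factorial n := by
        push_cast [Nat.factorial_succ]; ring
      have hf : (Nat.factorial n : ℝ) ≠ 0 := Nat.cast_ne_zero.mpr (Nat.factorial_ne_zero n)
      rw [h]
      field_simp
      push_cast
      ring
    rw [this]
    exact (Real.summable_pow_div_factorial l).mul_left l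
  rw [Summable.tsum_eq_zero_add hsum]
  have h1 : (fun n : ℕ => ((n + 1 : ℕ) : ℝ) * (l ^ (n + 1) / (Nat.factorial (n + 1))))
      = fun n : ℕ => l * (l ^ n / (Nat.factorial n)) := by
    funext n
    have h : (Nat.factorial (n + 1) : ℝ) = (n + 1) * Nat.factorial n := by
      push_cast [Nat.factorial_succ]; ring
    have hf : (Nat.factorial n : ℝ) ≠ 0 := Nat.cast_ne_zero.mpr (Nat.factorial_ne_zero n)
    rw [h]
    field_simp
    push_cast
    ring
  simp only [h1, tsum_mul_left, Nat.cast_zero, zero_mul, zero_add]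
  rw [← exp_tsum]

private lemma sum_inv_le (l : ℝ) (hl : 0 < l) :
    ∑' k : ℕ, (1 / (k : ℝ)) * (l ^ k / (Nat.factorial k))
      ≤ 2 / l * (Real.exp l - 1 - l) := by
  set g : ℕ → ℝ := fun k => if k = 0 then 0 else 2 * (l ^ k / (Nat.factorial (k + 1))) with hg
  have hsg : Summable g := by
    rw [← summable_nat_add_iff 1]
    have : (fun n : ℕ => g (n + 1)) = fun n : ℕ => 2 / l * (l ^ (n + 2) / (Nat.factorial (n + 2))) := by
      funext n
      simp only [hg, if_neg (Nat.succ_ne_zero n)]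
      field_simp
      ring
    rw [this]
    exact ((summable_nat_add_iff 2).mpr (Real.summable_pow_div_factorial l)).mul_left _
  have hle : ∀ k : ℕ, (1 / (k : ℝ)) * (l ^ k / (Nat.factorial k)) ≤ g k := by
    intro k
    match k with
    | 0 => simp [hg]
    | (n + 1) =>
      simp only [hg, if_neg (Nat.succ_ne_zero n)]
      have h1 : (Nat.factorial (n + 2) : ℝ) = (n + 2) * Nat.factorial (n + 1) := by
        push_cast [Nat.factorial_succ]; ring
      have hf : (0 : ℝ) < Nat.factorial (n + 1) := by positivity
      have hpow : (0 : ℝ) ≤ l ^ (n + 1) := by positivity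
      rw [h1, div_mul_eq_mul_div, one_mul, div_div, ← mul_div_assoc,
        div_le_div_iff₀ (by positivity) (by positivity)]
      push_cast
      nlinarith [mul_nonneg hpow hf.le, Nat.cast_nonneg (α := ℝ) n,
        mul_nonneg (mul_nonneg hpow hf.le) (Nat.cast_nonneg (α := ℝ) n)]
  have hsf : Summable (fun k : ℕ => (1 / (k : ℝ)) * (l ^ k / (Nat.factorial k))) := by
    apply Summable.of_nonneg_of_le (fun k => by positivity) hle hsg
  have hmain : ∑' k : ℕ, (1 / (k : ℝ)) * (l ^ k / (Nat.factorial k)) ≤ ∑' k, g k :=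
    Summable.tsum_le_tsum hle hsf hsg
  refine hmain.trans_eq ?_
  have hsh : (fun n : ℕ => g (n + 1)) = fun n : ℕ => 2 / l * (l ^ (n + 2) / (Nat.factorial (n + 2))) := by
    funext n
    simp only [hg, if_neg (Nat.succ_ne_zero n)]
    field_simp
    ring
  have hg0 : g 0 = 0 := by simp [hg]
  rw [Summable.tsum_eq_zero_add hsg, hg0, zero_add, hsh, tsum_mul_left]
  have h3 := shift2 l
  have h2 := shift1 l
  rw [← exp_tsum] at h2
  have h4 : ∑' n : ℕ, l ^ (n + 2) / (Nat.factorial (n + 2)) = Real.exp l - 1 - l := by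
    linarith
  rw [h4]

/-- If `X` is Poisson with parameter `λ > 0`, then `E[1/X | X ≥ 1] ≤ 2 / E[X | X ≥ 1]`.
Expectations conditioned on `X ≥ 1` are expressed via the Poisson pmf
`P(X = k) = exp(-λ) λ^k / k!` divided by `P(X ≥ 1) = 1 - exp(-λ)`.
(The `k = 0` terms vanish: `1/0 = 0` in `ℝ` and `0 * _ = 0`.) -/
theorem poisson_inv_cond_exp_le (l : ℝ) (hl : 0 < l) :
    (∑' k : ℕ, (1 / (k : ℝ)) * (Real.exp (-l) * l ^ k / (Nat.factorial k))) /
        (1 - Real.exp (-l)) ≤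
      2 / ((∑' k : ℕ, (k : ℝ) * (Real.exp (-l) * l ^ k / (Nat.factorial k))) /
        (1 - Real.exp (-l))) := by
  have hE : 0 < Real.exp (-l) := Real.exp_pos _
  have hE1 : Real.exp (-l) < 1 := Real.exp_lt_one_iff.mpr (by linarith)
  have hEe : Real.exp (-l) * Real.exp l = 1 := by
    rw [← Real.exp_add]; simp
  -- rewrite sums factoring out exp(-l)
  have hfac : ∀ (c : ℕ → ℝ), (fun k : ℕ => c k * (Real.exp (-l) * l ^ k / (Nat.factorial k)))
      = fun k : ℕ => Real.exp (-l) * (c k * (l ^ k / (Nat.factorial k))) := by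
    intro c; funext k; ring
  rw [show (fun k : ℕ => (1 / (k : ℝ)) * (Real.exp (-l) * l ^ k / (Nat.factorial k)))
      = fun k : ℕ => Real.exp (-l) * ((1 / (k : ℝ)) * (l ^ k / (Nat.factorial k))) from hfac _,
    show (fun k : ℕ => (k : ℝ) * (Real.exp (-l) * l ^ k / (Nat.factorial k)))
      = fun k : ℕ => Real.exp (-l) * ((k : ℝ) * (l ^ k / (Nat.factorial k))) from hfac _,
    tsum_mul_left, tsum_mul_left, sum_k]
  have hB : Real.exp (-l) * (l * Real.exp l) = l := by
    rw [mul_comm l (Real.exp l), ← mul_assoc, hEe, one_mul]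
  rw [hB]
  set A := ∑' k : ℕ, (1 / (k : ℝ)) * (l ^ k / (Nat.factorial k)) with hA
  have hAle : A ≤ 2 / l * (Real.exp l - 1 - l) := sum_inv_le l hl
  have hpos : 0 < 1 - Real.exp (-l) := by linarith
  have hAnn : 0 ≤ A := tsum_nonneg (fun k => by positivity)
  rw [div_div_eq_mul_div, div_le_div_iff₀ (by positivity) (by positivity)]
  -- goal: exp(-l) * A * l ≤ 2 * (1 - exp(-l)) * (1 - exp(-l))  (roughly)
  have hkey : 1 - l ≤ Real.exp (-l) := by
    have := Real.add_one_le_exp (-l); linarith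
  have h1 : Real.exp (-l) * A * l ≤ Real.exp (-l) * (2 / l * (Real.exp l - 1 - l)) * l := by
    have := mul_le_mul_of_nonneg_left hAle hE.le
    nlinarith
  have h2 : Real.exp (-l) * (2 / l * (Real.exp l - 1 - l)) * l
      = 2 * (1 - Real.exp (-l) - l * Real.exp (-l)) := by
    field_simp
    nlinarith [hEe]
  nlinarith [sq_nonneg (1 - Real.exp (-l)), mul_pos hE hl]
end

section
/- Let X₁,...,X_m be independent Bernoulli random variables with parameters p₁,...,p_m and let S = Σ X_i. Then the total variation distance between the law of S and the Poisson distribution with parameter λ = Σ p_i is at most Σ p_i² (Le Cam's inequality). -/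
open MeasureTheory ProbabilityTheory
open scoped Classical

noncomputable def pois (l : ℝ) (k : ℕ) : ℝ := Real.exp (-l) * l ^ k / (Nat.factorial k)

lemma pois_nonneg {l : ℝ} (hl : 0 ≤ l) (k : ℕ) : 0 ≤ pois l k := by
  unfold pois
  positivity

lemma hasSum_pois {l : ℝ} (hl : 0 ≤ l) : HasSum (pois l) 1 := by
  unfold pois
  apply (hasSum_mul_left_iff (Real.exp_ne_zero l)).mp
  simp only [mul_one]
  have : (fun i ↦ Real.exp l * (Real.exp (-l) * l ^ i / ↑(Nat.factorial i))) =
      fun i ↦ l ^ i / ↑(Nat.factorial i) := by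
    ext n
    rw [mul_div_assoc, Real.exp_neg, ← mul_assoc, ← div_eq_mul_inv,
      div_self (Real.exp_ne_zero l), one_mul]
  rw [this, Real.exp_eq_exp_ℝ]
  exact NormedSpace.expSeries_div_hasSum_exp l

lemma summable_pois {l : ℝ} (hl : 0 ≤ l) : Summable (pois l) := (hasSum_pois hl).summable

lemma tsum_pois {l : ℝ} (hl : 0 ≤ l) : ∑' k, pois l k = 1 := (hasSum_pois hl).tsum_eq

noncomputable def poisSet (l : ℝ) (A : Set ℕ) : ℝ := ∑' k, if k ∈ A then pois l k else 0

lemma summable_ind {l : ℝ} (hl : 0 ≤ l) (A : Set ℕ) :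
    Summable (fun k => if k ∈ A then pois l k else 0) := by
  apply Summable.of_nonneg_of_le _ _ (summable_pois hl)
  · intro k; split <;> simp [pois_nonneg hl]
  · intro k; split
    · exact le_refl _
    · exact pois_nonneg hl k

lemma poisSet_nonneg {l : ℝ} (hl : 0 ≤ l) (A : Set ℕ) : 0 ≤ poisSet l A := by
  apply tsum_nonneg
  intro k; split <;> simp [pois_nonneg hl]

lemma poisSet_le_one {l : ℝ} (hl : 0 ≤ l) (A : Set ℕ) : poisSet l A ≤ 1 := by
  rw [← tsum_pois hl]
  apply Summable.tsum_le_tsum _ (summable_ind hl A) (summable_pois hl)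
  intro k; split <;> simp [pois_nonneg hl]

lemma pois_conv (a b : ℝ) (n : ℕ) :
    ∑ k ∈ Finset.range (n + 1), pois a k * pois b (n - k) = pois (a + b) n := by
  unfold pois
  rw [show -(a + b) = -a + -b by ring, Real.exp_add, add_pow]
  rw [Finset.mul_sum, Finset.sum_div]
  apply Finset.sum_congr rfl
  intro k hk
  have hk' : k ≤ n := Nat.lt_succ_iff.mp (Finset.mem_range.mp hk)
  have hfac : (Nat.factorial n : ℝ) =
      (n.choose k : ℝ) * (Nat.factorial k) * (Nat.factorial (n - k)) := by
    exact_mod_cast (Nat.choose_mul_factorial_mul_factorial hk').symm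
  rw [hfac]
  have h1 : (Nat.factorial k : ℝ) ≠ 0 := Nat.cast_ne_zero.mpr (Nat.factorial_ne_zero k)
  have h2 : (Nat.factorial (n - k) : ℝ) ≠ 0 := Nat.cast_ne_zero.mpr (Nat.factorial_ne_zero _)
  have h3 : (n.choose k : ℝ) ≠ 0 := Nat.cast_ne_zero.mpr ((Nat.choose_pos hk').ne')
  field_simp

lemma poisSet_conv {a b : ℝ} (ha : 0 ≤ a) (hb : 0 ≤ b) (A : Set ℕ) :
    poisSet (a + b) A = ∑' j, pois a j * poisSet b {k | k + j ∈ A} := by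
  set F : ℕ × ℕ → ℝ := fun x => if x.2 + x.1 ∈ A then pois a x.1 * pois b x.2 else 0 with hF
  have hG : Summable (fun x : ℕ × ℕ => pois a x.1 * pois b x.2) :=
    (summable_pois ha).mul_of_nonneg (summable_pois hb) (pois_nonneg ha) (pois_nonneg hb)
  have hFnn : ∀ x, 0 ≤ F x := by
    intro x; simp only [hF]; split
    · exact mul_nonneg (pois_nonneg ha _) (pois_nonneg hb _)
    · exact le_refl 0
  have hFle : ∀ x, F x ≤ pois a x.1 * pois b x.2 := by
    intro x; simp only [hF]; split
    · exact le_refl _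
    · exact mul_nonneg (pois_nonneg ha _) (pois_nonneg hb _)
  have hFsm : Summable F := Summable.of_nonneg_of_le hFnn hFle hG
  -- RHS = ∑' over product
  have hrhs : ∑' j, pois a j * poisSet b {k | k + j ∈ A} = ∑' x : ℕ × ℕ, F x := by
    rw [Summable.tsum_prod' hFsm (fun j => hFsm.prod_factor j)]
    apply tsum_congr
    intro j
    rw [poisSet, ← tsum_mul_left]
    apply tsum_congr
    intro k
    simp only [hF, Set.mem_setOf_eq, mul_ite, mul_zero]
  rw [hrhs]
  -- regroup by antidiagonal
  have hσ : Summable (fun σ : (Σ n : ℕ, {x // x ∈ Finset.HasAntidiagonal.antidiagonal n}) =>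
      F (Finset.HasAntidiagonal.sigmaAntidiagonalEquivProd σ)) :=
    (Finset.HasAntidiagonal.sigmaAntidiagonalEquivProd.summable_iff.mpr hFsm)
  rw [← Finset.HasAntidiagonal.sigmaAntidiagonalEquivProd.tsum_eq F]
  rw [Summable.tsum_sigma' (fun n => (hasSum_fintype _).summable) hσ]
  unfold poisSet
  apply tsum_congr
  intro n
  have : ∑' (c : {x // x ∈ Finset.HasAntidiagonal.antidiagonal n}),
      F (Finset.HasAntidiagonal.sigmaAntidiagonalEquivProd ⟨n, c⟩) = ∑ x ∈ Finset.HasAntidiagonal.antidiagonal n, F x := by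
    rw [← Finset.tsum_subtype]
    rfl
  rw [this]
  by_cases hn : n ∈ A
  · rw [if_pos hn]
    have : ∀ x ∈ Finset.HasAntidiagonal.antidiagonal n, F x = pois a x.1 * pois b x.2 := by
      intro x hx
      have hx' : x.1 + x.2 = n := Finset.HasAntidiagonal.mem_antidiagonal.mp hx
      simp only [hF]
      rw [if_pos]
      rw [Nat.add_comm, hx']
      exact hn
    rw [Finset.sum_congr rfl this, Finset.Nat.sum_antidiagonal_eq_sum_range_succ_mk,
      pois_conv]
  · rw [if_neg hn]
    symm
    apply Finset.sum_eq_zero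
    intro x hx
    have hx' : x.1 + x.2 = n := Finset.HasAntidiagonal.mem_antidiagonal.mp hx
    simp only [hF]
    rw [if_neg]
    rw [Nat.add_comm, hx']
    exact hn

lemma prob_split {Ω : Type*} [MeasureSpace Ω] [IsProbabilityMeasure (volume : Measure Ω)]
    (S Y : Ω → ℕ) (hS : Measurable S) (hY : Measurable Y)
    (hval : ∀ ω, Y ω = 0 ∨ Y ω = 1) (hind : IndepFun S Y volume) (A : Set ℕ) :
    (volume {ω | S ω + Y ω ∈ A}).toReal =
      (1 - (volume {ω | Y ω = 1}).toReal) * (volume {ω | S ω ∈ {k | k + 0 ∈ A}}).toReal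
      + (volume {ω | Y ω = 1}).toReal * (volume {ω | S ω ∈ {k | k + 1 ∈ A}}).toReal := by
  have hmN : ∀ B : Set ℕ, MeasurableSet B := fun B => .of_discrete
  have hY1 : {ω | Y ω = 1} = Y ⁻¹' {1} := by ext ω; simp
  have hY0 : Y ⁻¹' {0} = {ω | Y ω = 1}ᶜ := by
    ext ω; rcases hval ω with h | h <;> simp [h]
  have hdecomp : {ω | S ω + Y ω ∈ A} =
      (S ⁻¹' {k | k + 0 ∈ A} ∩ Y ⁻¹' {0}) ∪ (S ⁻¹' {k | k + 1 ∈ A} ∩ Y ⁻¹' {1}) := by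
    ext ω; rcases hval ω with h | h <;> simp [h, Set.mem_setOf_eq]
  have hdisj : Disjoint (S ⁻¹' {k | k + 0 ∈ A} ∩ Y ⁻¹' {0})
      (S ⁻¹' {k | k + 1 ∈ A} ∩ Y ⁻¹' {1}) := by
    apply Set.disjoint_left.mpr
    rintro ω ⟨_, h0⟩ ⟨_, h1⟩
    simp only [Set.mem_preimage, Set.mem_singleton_iff] at h0 h1
    omega
  rw [hdecomp, measure_union hdisj ((hS (hmN _)).inter (hY (hmN _)))]
  rw [hind.measure_inter_preimage_eq_mul _ _ (hmN _) (hmN _),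
    hind.measure_inter_preimage_eq_mul _ _ (hmN _) (hmN _)]
  rw [hY0, prob_compl_eq_one_sub (by rw [hY1]; exact hY (hmN _))]
  rw [ENNReal.toReal_add (by finiteness) (by finiteness), ENNReal.toReal_mul,
    ENNReal.toReal_mul, ENNReal.toReal_sub_of_le prob_le_one ENNReal.one_ne_top,
    ENNReal.toReal_one, hY1]
  have hpre : ∀ B : Set ℕ, S ⁻¹' B = {ω | S ω ∈ B} := fun _ => rfl
  rw [hpre, hpre]
  ring

lemma step_bound (q E : ℝ) (hq0 : 0 ≤ q) (hq1 : q ≤ 1) (hE : 0 ≤ E)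
    (u v : ℕ → ℝ) (hu0 : ∀ j, 0 ≤ u j) (hu1 : ∀ j, u j ≤ 1)
    (huv : ∀ j, |u j - v j| ≤ E) :
    |((1 - q) * u 0 + q * u 1) - ∑' j, pois q j * v j| ≤ q ^ 2 + E := by
  have hπ : Summable (pois q) := summable_pois hq0
  set b : ℕ → ℝ := fun j => if j = 0 then 1 - q else if j = 1 then q else 0 with hb
  have hbz : ∀ j ∉ ({0, 1} : Finset ℕ), b j = 0 := by
    intro j hj
    simp only [Finset.mem_insert, Finset.mem_singleton, not_or] at hj
    simp [hb, hj.1, hj.2]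
  have hbsm : Summable b := summable_of_ne_finset_zero hbz
  have hbuz : ∀ j ∉ ({0, 1} : Finset ℕ), b j * u j = 0 := by
    intro j hj; rw [hbz j hj, zero_mul]
  have hbusm : Summable (fun j => b j * u j) := summable_of_ne_finset_zero hbuz
  have htsum_b : ∑' j, b j = 1 := by
    rw [tsum_eq_sum hbz, Finset.sum_pair (by norm_num : (0 : ℕ) ≠ 1)]
    simp [hb]
  have htsum_bu : ∑' j, b j * u j = (1 - q) * u 0 + q * u 1 := by
    rw [tsum_eq_sum hbuz, Finset.sum_pair (by norm_num : (0 : ℕ) ≠ 1)]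
    simp [hb]
  have hπu : Summable (fun j => pois q j * u j) := by
    apply Summable.of_nonneg_of_le (fun j => mul_nonneg (pois_nonneg hq0 j) (hu0 j)) _ hπ
    exact fun j => mul_le_of_le_one_right (pois_nonneg hq0 j) (hu1 j)
  have hπuv : Summable (fun j => pois q j * (u j - v j)) := by
    apply Summable.of_norm
    apply Summable.of_nonneg_of_le (fun j => norm_nonneg _) _ (hπ.mul_right E)
    intro j
    rw [Real.norm_eq_abs, abs_mul, abs_of_nonneg (pois_nonneg hq0 j)]
    exact mul_le_mul_of_nonneg_left (huv j) (pois_nonneg hq0 j)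
  have hπv : Summable (fun j => pois q j * v j) := by
    have : (fun j => pois q j * v j) = fun j => pois q j * u j - pois q j * (u j - v j) := by
      funext j; ring
    rw [this]; exact hπu.sub hπuv
  set c : ℕ → ℝ := fun j => b j - pois q j with hc
  have hcsm : Summable c := hbsm.sub hπ
  have htsum_c : ∑' j, c j = 0 := by
    rw [hc]; rw [Summable.tsum_sub hbsm hπ, htsum_b, tsum_pois hq0, sub_self]
  have hcusm : Summable (fun j => c j * u j) := by
    have : (fun j => c j * u j) = fun j => b j * u j - pois q j * u j := by
      funext j; simp [hc]; ring
    rw [this]; exact hbusm.sub hπu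
  have key1 : ∑' j, c j * u j = ((1 - q) * u 0 + q * u 1) - ∑' j, pois q j * u j := by
    have : (fun j => c j * u j) = fun j => b j * u j - pois q j * u j := by
      funext j; simp [hc]; ring
    rw [this, Summable.tsum_sub hbusm hπu, htsum_bu]
  have key2 : ∑' j, pois q j * (u j - v j)
      = (∑' j, pois q j * u j) - ∑' j, pois q j * v j := by
    have : (fun j => pois q j * (u j - v j))
        = fun j => pois q j * u j - pois q j * v j := by funext j; ring
    rw [this, Summable.tsum_sub hπu hπv]
  -- decomposition
  have hdecomp : ((1 - q) * u 0 + q * u 1) - ∑' j, pois q j * v j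
      = (∑' j, c j * u j) + ∑' j, pois q j * (u j - v j) := by
    rw [key1, key2]; ring
  -- the half trick
  have hhalf : ∑' j, c j * u j = ∑' j, c j * (u j - 1 / 2) := by
    have : (fun j => c j * (u j - 1 / 2)) = fun j => c j * u j - c j * (1 / 2) := by
      funext j; ring
    rw [this, Summable.tsum_sub hcusm (hcsm.mul_right _), tsum_mul_right, htsum_c, zero_mul, sub_zero]
  -- the abs of c sums
  have e0 : |c 0| = Real.exp (-q) - (1 - q) := by
    have hcz : c 0 = (1 - q) - Real.exp (-q) := by simp [hc, hb, pois]
    rw [hcz, abs_sub_comm, abs_of_nonneg (by nlinarith [Real.add_one_le_exp (-q)])]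
  have e1 : |c 1| = q - q * Real.exp (-q) := by
    have hexp1 : Real.exp (-q) ≤ 1 := by
      rw [← Real.exp_zero]; exact Real.exp_le_exp.mpr (by linarith)
    have hcz : c 1 = q - Real.exp (-q) * q := by simp [hc, hb, pois]
    rw [hcz, abs_of_nonneg (by nlinarith)]
    ring
  set d : ℕ → ℝ := fun j => |c j| - pois q j with hd
  have hdz : ∀ j ∉ ({0, 1} : Finset ℕ), d j = 0 := by
    intro j hj
    have : c j = -pois q j := by rw [hc]; simp only []; rw [hbz j hj]; ring
    simp [hd, this, abs_of_nonneg (pois_nonneg hq0 j)]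
  have hdsm : Summable d := summable_of_ne_finset_zero hdz
  have habs_c : Summable (fun j => |c j|) := hcsm.abs
  have htsum_absc : ∑' j, |c j| = 2 * q * (1 - Real.exp (-q)) := by
    have hsplit : (fun j => |c j|) = fun j => pois q j + d j := by
      funext j; simp [hd]
    rw [hsplit, Summable.tsum_add hπ hdsm, tsum_pois hq0, tsum_eq_sum hdz,
      Finset.sum_pair (by norm_num : (0 : ℕ) ≠ 1)]
    have hd0 : d 0 = |c 0| - Real.exp (-q) := by simp [hd, pois]
    have hd1 : d 1 = |c 1| - Real.exp (-q) * q := by simp [hd, pois]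
    rw [hd0, hd1, e0, e1]; ring
  -- bound on first term
  have hbd1 : |∑' j, c j * u j| ≤ q ^ 2 := by
    rw [hhalf]
    have hsm : Summable (fun j => c j * (u j - 1 / 2)) := by
      have : (fun j => c j * (u j - 1 / 2)) = fun j => c j * u j - c j * (1 / 2) := by
        funext j; ring
      rw [this]; exact hcusm.sub (hcsm.mul_right _)
    calc |∑' j, c j * (u j - 1 / 2)| ≤ ∑' j, |c j * (u j - 1 / 2)| := by
          rw [← Real.norm_eq_abs]
          exact (norm_tsum_le_tsum_norm (by simpa only [Real.norm_eq_abs] using hsm.abs)).trans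
            (le_of_eq (by simp only [Real.norm_eq_abs]))
      _ ≤ ∑' j, |c j| * (1 / 2) := by
          apply Summable.tsum_le_tsum _ hsm.abs (habs_c.mul_right _)
          intro j
          rw [abs_mul]
          apply mul_le_mul_of_nonneg_left _ (abs_nonneg _)
          rw [abs_le]
          constructor <;> [linarith [hu0 j]; linarith [hu1 j]]
      _ = (∑' j, |c j|) * (1 / 2) := tsum_mul_right
      _ = q * (1 - Real.exp (-q)) := by rw [htsum_absc]; ring
      _ ≤ q ^ 2 := by nlinarith [Real.add_one_le_exp (-q)]
  -- bound on second term
  have hbd2 : |∑' j, pois q j * (u j - v j)| ≤ E := by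
    calc |∑' j, pois q j * (u j - v j)| ≤ ∑' j, |pois q j * (u j - v j)| := by
          rw [← Real.norm_eq_abs]
          exact (norm_tsum_le_tsum_norm (by simpa only [Real.norm_eq_abs] using hπuv.abs)).trans
            (le_of_eq (by simp only [Real.norm_eq_abs]))
      _ ≤ ∑' j, pois q j * E := by
          apply Summable.tsum_le_tsum _ hπuv.abs (hπ.mul_right E)
          intro j
          rw [abs_mul, abs_of_nonneg (pois_nonneg hq0 j)]
          exact mul_le_mul_of_nonneg_left (huv j) (pois_nonneg hq0 j)
      _ = (∑' j, pois q j) * E := tsum_mul_right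
      _ = E := by rw [tsum_pois hq0, one_mul]
  calc |((1 - q) * u 0 + q * u 1) - ∑' j, pois q j * v j|
      = |(∑' j, c j * u j) + ∑' j, pois q j * (u j - v j)| := by rw [hdecomp]
    _ ≤ |∑' j, c j * u j| + |∑' j, pois q j * (u j - v j)| := abs_add_le _ _
    _ ≤ q ^ 2 + E := add_le_add hbd1 hbd2

lemma le_cam_aux {Ω : Type*} [MeasureSpace Ω]
    [IsProbabilityMeasure (volume : Measure Ω)]
    (m : ℕ) (X : Fin m → Ω → ℕ) (hmeas : ∀ i, Measurable (X i))
    (hval : ∀ i ω, X i ω = 0 ∨ X i ω = 1)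
    (p : Fin m → ℝ) (hp : ∀ i, 0 ≤ p i ∧ p i ≤ 1)
    (hbern : ∀ i, (volume {ω | X i ω = 1}).toReal = p i)
    (hindep : iIndepFun X volume) (s : Finset (Fin m)) :
    ∀ A : Set ℕ,
      |(volume {ω | (∑ i ∈ s, X i ω) ∈ A}).toReal - poisSet (∑ i ∈ s, p i) A| ≤
        ∑ i ∈ s, p i ^ 2 := by
  induction s using Finset.induction_on with
  | empty =>
      intro A
      simp only [Finset.sum_empty]
      have hps : poisSet 0 A = if 0 ∈ A then 1 else 0 := by
        unfold poisSet
        rw [tsum_eq_single 0]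
        · simp [pois]
        · intro k hk
          simp [pois, zero_pow hk]
      by_cases h0 : 0 ∈ A
      · have huniv : {ω : Ω | (0 : ℕ) ∈ A} = Set.univ := by ext ω; simp [h0]
        rw [huniv, hps, if_pos h0, measure_univ]; simp
      · have hempty : {ω : Ω | (0 : ℕ) ∈ A} = ∅ := by ext ω; simp [h0]
        rw [hempty, hps, if_neg h0]; simp
  | @insert a t ha ih =>
      intro A
      have hS : Measurable fun ω => ∑ i ∈ t, X i ω :=
        Finset.measurable_sum t fun i _ => hmeas i
      have hind : IndepFun (fun ω => ∑ i ∈ t, X i ω) (X a) volume := by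
        have h := hindep.indepFun_finsetSum_of_notMem hmeas ha
        have he : (∑ j ∈ t, X j) = fun ω => ∑ i ∈ t, X i ω := by
          funext ω; simp [Finset.sum_apply]
        rwa [he] at h
      have hq0 := (hp a).1
      have hq1 := (hp a).2
      have hl0 : 0 ≤ ∑ i ∈ t, p i := Finset.sum_nonneg fun i _ => (hp i).1
      have hE0 : 0 ≤ ∑ i ∈ t, p i ^ 2 := Finset.sum_nonneg fun i _ => sq_nonneg _
      have hset : {ω | (∑ i ∈ insert a t, X i ω) ∈ A}
          = {ω | ((∑ i ∈ t, X i ω) + X a ω) ∈ A} := by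
        ext ω; rw [Set.mem_setOf_eq, Set.mem_setOf_eq, Finset.sum_insert ha, Nat.add_comm]
      rw [hset, Finset.sum_insert ha, Finset.sum_insert ha,
        prob_split _ _ hS (hmeas a) (fun ω => hval a ω) hind A, hbern a,
        poisSet_conv hq0 hl0 A]
      exact step_bound (p a) (∑ i ∈ t, p i ^ 2) hq0 hq1 hE0
        (fun j => (volume {ω | (∑ i ∈ t, X i ω) ∈ {k | k + j ∈ A}}).toReal)
        (fun j => poisSet (∑ i ∈ t, p i) {k | k + j ∈ A})
        (fun j => ENNReal.toReal_nonneg)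
        (fun j => by simpa using ENNReal.toReal_mono ENNReal.one_ne_top prob_le_one)
        (fun j => ih {k | k + j ∈ A})

/-- **Le Cam's inequality.** Let `X 1, …, X m` be independent Bernoulli random variables
with parameters `p 1, …, p m` and `S = Σ X i`. Then the total variation distance between
the law of `S` and the Poisson distribution with parameter `λ = Σ p i` is at most
`Σ (p i)²`: for every set `A ⊆ ℕ`,
`|P(S ∈ A) - Σ_{k ∈ A} e^{-λ} λ^k / k!| ≤ Σ (p i)²`. -/
theorem le_cam_inequality {Ω : Type*} [MeasureSpace Ω]
    [IsProbabilityMeasure (volume : Measure Ω)]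
    (m : ℕ) (X : Fin m → Ω → ℕ) (hmeas : ∀ i, Measurable (X i))
    (hval : ∀ i ω, X i ω = 0 ∨ X i ω = 1)
    (p : Fin m → ℝ) (hp : ∀ i, 0 ≤ p i ∧ p i ≤ 1)
    (hbern : ∀ i, (volume {ω | X i ω = 1}).toReal = p i)
    (hindep : iIndepFun X volume) :
    ∀ A : Set ℕ,
      |(volume {ω | (∑ i, X i ω) ∈ A}).toReal -
          ∑' k : ℕ, (if h : k ∈ A then
            Real.exp (-(∑ i, p i)) * (∑ i, p i) ^ k / (Nat.factorial k) else 0)| ≤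
        ∑ i, (p i) ^ 2 := by
  intro A
  have hts : (∑' k : ℕ, (if h : k ∈ A then
      Real.exp (-(∑ i, p i)) * (∑ i, p i) ^ k / (Nat.factorial k) else 0))
      = poisSet (∑ i, p i) A := by
    unfold poisSet pois
    apply tsum_congr
    intro k
    rw [dite_eq_ite]
  rw [hts]
  exact le_cam_aux m X hmeas hval p hp hbern hindep Finset.univ A
end
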